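/- With notation as above (folded segments on $[m]^d$, windows $W_i(\vec{x})$ of side $\ell_i$ anchored at $\vec{x}$, and $B_i(\vec{x},\vec{y}) = \{\vec{z} \in W_i(\vec{x}) : \vec{y} \in FS(\vec{x}, \vec{z})\}$), for every fixed point $\vec{y} \in [m]^d$ the total normalized cost satisfies $\sum_{\vec{x} \in [m]^d} |B_i(\vec{x}, \vec{y})| / \ell_i^d \leq d \cdot \ell_i$. -/

import Mathlib

/-- The `i`-th leg `E_i(x,y)` of the folded segment from `x` to `y`. -/
def Ei (d : ℕ) (x y : Fin d → ℤ) (i : Fin d) : Set (Fin d → ℤ) :=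
  {z | (∀ t, t < i → z t = y t) ∧ (∀ t, i < t → z t = x t) ∧
    min (x i) (y i) ≤ z i ∧ z i ≤ max (x i) (y i)}

/-- The folded segment `FS(x,y) = (⋃ i, E_i(x,y)) \ {x}`. -/
def FS (d : ℕ) (x y : Fin d → ℤ) : Set (Fin d → ℤ) :=
  (⋃ i, Ei d x y i) \ {x}

/-- The `i`-th piece of `B(x,y)`: points `z` of the grid in the window of `x`
such that `y` lies on the `i`-th leg of `FS(x,z)`. -/
noncomputable def Bi (d m ℓ : ℕ) (y : Fin d → ℤ) (i : Fin d) (x : Fin d → ℤ) : Finset (Fin d → ℤ) :=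
  (Finset.Icc (fun _ => (1 : ℤ)) (fun _ => (m : ℤ))).filter
    (fun z => (∀ t, x t ≤ z t ∧ z t < x t + ℓ) ∧ (∀ t, t < i → y t = z t) ∧
      (∀ t, i < t → y t = x t) ∧ x i ≤ y i ∧ y i ≤ z i)

lemma Bset_subset (d m ℓ : ℕ) (x y : Fin d → ℤ) :
    {z : Fin d → ℤ | (∀ t, 1 ≤ z t ∧ z t ≤ (m : ℤ)) ∧
        (∀ t, x t ≤ z t ∧ z t < x t + ℓ) ∧ y ∈ FS d x z}
      ⊆ ⋃ i, (Bi d m ℓ y i x : Set (Fin d → ℤ)) := by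
  rintro z ⟨hz1, hz2, hE, -⟩
  simp only [Set.mem_iUnion] at hE ⊢
  obtain ⟨i, h1, h2, h3, h4⟩ := hE
  have hxz : x i ≤ z i := (hz2 i).1
  rw [min_eq_left hxz] at h3
  rw [max_eq_right hxz] at h4
  refine ⟨i, ?_⟩
  simp only [Finset.coe_filter, Set.mem_setOf_eq, Bi, Finset.mem_Icc]
  refine ⟨⟨?_, ?_⟩, hz2, h1, h2, h3, h4⟩
  · intro t; exact (hz1 t).1
  · intro t; exact (hz1 t).2

lemma ncard_le_sum (d m ℓ : ℕ) (x y : Fin d → ℤ) :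
    Set.ncard {z : Fin d → ℤ | (∀ t, 1 ≤ z t ∧ z t ≤ (m : ℤ)) ∧
        (∀ t, x t ≤ z t ∧ z t < x t + ℓ) ∧ y ∈ FS d x z}
      ≤ ∑ i : Fin d, (Bi d m ℓ y i x).card := by
  have h1 : {z : Fin d → ℤ | (∀ t, 1 ≤ z t ∧ z t ≤ (m : ℤ)) ∧
        (∀ t, x t ≤ z t ∧ z t < x t + ℓ) ∧ y ∈ FS d x z}
      ⊆ ↑(Finset.univ.biUnion (fun i => Bi d m ℓ y i x)) := by
    rw [Finset.coe_biUnion]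
    refine (Bset_subset d m ℓ x y).trans ?_
    simp
  calc Set.ncard _ ≤ Set.ncard ↑(Finset.univ.biUnion (fun i => Bi d m ℓ y i x)) :=
        Set.ncard_le_ncard h1 (Finset.finite_toSet _)
    _ = (Finset.univ.biUnion (fun i => Bi d m ℓ y i x)).card := Set.ncard_coe_finset _
    _ ≤ ∑ i : Fin d, (Bi d m ℓ y i x).card := Finset.card_biUnion_le

lemma sum_Bi_le (d m ℓ : ℕ) (hℓ : 1 ≤ ℓ) (y : Fin d → ℤ) (i : Fin d) :
    ∑ x ∈ Finset.Icc (fun _ => (1 : ℤ)) (fun _ => (m : ℤ)), (Bi d m ℓ y i x).card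
      ≤ ℓ ^ (d + 1) := by
  set S : Finset (Fin d → ℤ) :=
    Finset.Icc (fun t => if t ≤ i then y t - ℓ + 1 else y t) y with hSdef
  set T : Finset (Fin d → ℤ) :=
    Finset.Icc y (fun t => if t < i then y t else y t + ℓ - 1) with hTdef
  have hmemBi : ∀ x z, z ∈ Bi d m ℓ y i x →
      (∀ t, x t ≤ z t ∧ z t < x t + ℓ) ∧ (∀ t, t < i → y t = z t) ∧
      (∀ t, i < t → y t = x t) ∧ x i ≤ y i ∧ y i ≤ z i := by
    intro x z hz
    exact (Finset.mem_filter.mp hz).2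
  have hT : ∀ x z, z ∈ Bi d m ℓ y i x → z ∈ T := by
    intro x z hz
    obtain ⟨hw, hlt, hgt, hxy, hyz⟩ := hmemBi x z hz
    rw [hTdef, Finset.mem_Icc]
    constructor <;> (intro t; dsimp only)
    · rcases lt_trichotomy t i with h | h | h
      · exact le_of_eq (hlt t h)
      · subst h; exact hyz
      · rw [hgt t h]; exact (hw t).1
    · rcases lt_trichotomy t i with h | h | h
      · rw [if_pos h]; exact (hlt t h).ge
      · subst h; rw [if_neg (lt_irrefl t)]
        have h1 := (hw t).2; omega
      · rw [if_neg (not_lt_of_gt h)]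
        have h1 := (hw t).2; have h2 := hgt t h; omega
  have hS : ∀ x z, z ∈ Bi d m ℓ y i x → x ∈ S := by
    intro x z hz
    obtain ⟨hw, hlt, hgt, hxy, hyz⟩ := hmemBi x z hz
    rw [hSdef, Finset.mem_Icc]
    constructor <;> (intro t; dsimp only)
    · rcases lt_trichotomy t i with h | h | h
      · rw [if_pos (le_of_lt h)]
        have h1 := (hw t).2; have h2 := hlt t h; omega
      · subst h; rw [if_pos le_rfl]
        have h1 := (hw t).2; omega
      · rw [if_neg (not_le_of_gt h)]
        exact (hgt t h).le
    · rcases lt_trichotomy t i with h | h | h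
      · have h1 := (hw t).1; have h2 := hlt t h; omega
      · subst h; exact hxy
      · exact (hgt t h).ge
  have key : ∀ x, (Bi d m ℓ y i x).card ≤ if x ∈ S then T.card else 0 := by
    intro x
    by_cases h : x ∈ S
    · simp only [h, if_true]
      exact Finset.card_le_card (fun z hz => hT x z hz)
    · simp only [h, if_false, Nat.le_zero, Finset.card_eq_zero]
      by_contra hne
      obtain ⟨z, hz⟩ := Finset.nonempty_iff_ne_empty.mpr hne
      exact h (hS x z hz)
  have hScard : S.card = ∏ t : Fin d, (if t ≤ i then ℓ else 1) := by
    rw [hSdef, Pi.card_Icc]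
    refine Finset.prod_congr rfl (fun t _ => ?_)
    rw [Int.card_Icc]
    split_ifs with h <;> omega
  have hTcard : T.card = ∏ t : Fin d, (if t < i then 1 else ℓ) := by
    rw [hTdef, Pi.card_Icc]
    refine Finset.prod_congr rfl (fun t _ => ?_)
    rw [Int.card_Icc]
    split_ifs with h <;> omega
  have hprod : S.card * T.card = ℓ ^ (d + 1) := by
    rw [hScard, hTcard, ← Finset.prod_mul_distrib]
    have heq : ∀ t : Fin d, (if t ≤ i then ℓ else 1) * (if t < i then 1 else ℓ)
        = ℓ * (if t = i then ℓ else 1) := by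
      intro t
      rcases lt_trichotomy t i with h | h | h
      · simp [le_of_lt h, h, ne_of_lt h]
      · subst h; simp
      · simp [not_le_of_gt h, not_lt_of_gt h, (ne_of_gt h)]
    rw [Finset.prod_congr rfl (fun t _ => heq t), Finset.prod_mul_distrib,
      Finset.prod_const, Finset.prod_ite_eq' Finset.univ i (fun _ => ℓ)]
    simp [pow_succ, mul_comm]
  calc ∑ x ∈ Finset.Icc (fun _ => (1 : ℤ)) (fun _ => (m : ℤ)), (Bi d m ℓ y i x).card
      ≤ ∑ x ∈ Finset.Icc (fun _ => (1 : ℤ)) (fun _ => (m : ℤ)),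
          (if x ∈ S then T.card else 0) := Finset.sum_le_sum (fun x _ => key x)
    _ = ∑ x ∈ (Finset.Icc (fun _ => (1 : ℤ)) (fun _ => (m : ℤ))).filter (· ∈ S),
          T.card := by rw [Finset.sum_filter]
    _ ≤ ∑ _x ∈ S, T.card := by
        refine Finset.sum_le_sum_of_subset (fun x hx => ?_)
        exact (Finset.mem_filter.mp hx).2
    _ = S.card * T.card := by rw [Finset.sum_const, smul_eq_mul]
    _ = ℓ ^ (d + 1) := hprod

/-- Total normalized cost of a single queried point `y`:
`∑_{x ∈ [m]^d} |B(x,y)| / ℓ^d ≤ d ℓ`, where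
`B(x,y) = {z ∈ W(x) : y ∈ FS(x,z)}` and `W(x)` is the window of side `ℓ`
anchored at `x` (intersected with the grid `[m]^d`). -/
theorem stmt9 (d m ℓ : ℕ) (hd : 1 ≤ d) (hm : 1 ≤ m) (hℓ : 1 ≤ ℓ)
    (y : Fin d → ℤ) (hy : ∀ t, 1 ≤ y t ∧ y t ≤ (m : ℤ)) :
    ∑ x ∈ Finset.Icc (fun _ => (1 : ℤ)) (fun _ => (m : ℤ)),
      ((Set.ncard {z : Fin d → ℤ | (∀ t, 1 ≤ z t ∧ z t ≤ (m : ℤ)) ∧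
          (∀ t, x t ≤ z t ∧ z t < x t + ℓ) ∧ y ∈ FS d x z} : ℝ) / (ℓ : ℝ) ^ d)
      ≤ (d : ℝ) * ℓ := by
  have hℓpos : (0 : ℝ) < (ℓ : ℝ) := by exact_mod_cast hℓ
  have hpow : (0 : ℝ) < (ℓ : ℝ) ^ d := pow_pos hℓpos d
  calc ∑ x ∈ Finset.Icc (fun _ => (1 : ℤ)) (fun _ => (m : ℤ)),
      ((Set.ncard {z : Fin d → ℤ | (∀ t, 1 ≤ z t ∧ z t ≤ (m : ℤ)) ∧
          (∀ t, x t ≤ z t ∧ z t < x t + ℓ) ∧ y ∈ FS d x z} : ℝ) / (ℓ : ℝ) ^ d)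
      ≤ ∑ x ∈ Finset.Icc (fun _ => (1 : ℤ)) (fun _ => (m : ℤ)),
          ((∑ i : Fin d, ((Bi d m ℓ y i x).card : ℝ)) / (ℓ : ℝ) ^ d) := by
        refine Finset.sum_le_sum (fun x _ => ?_)
        refine div_le_div_of_nonneg_right ?_ hpow.le
        have := ncard_le_sum d m ℓ x y
        calc (Set.ncard _ : ℝ) ≤ ((∑ i : Fin d, (Bi d m ℓ y i x).card : ℕ) : ℝ) := by
              exact_mod_cast this
          _ = ∑ i : Fin d, ((Bi d m ℓ y i x).card : ℝ) := by push_cast; ring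
    _ = (∑ i : Fin d, ∑ x ∈ Finset.Icc (fun _ => (1 : ℤ)) (fun _ => (m : ℤ)),
          ((Bi d m ℓ y i x).card : ℝ)) / (ℓ : ℝ) ^ d := by
        rw [← Finset.sum_div, Finset.sum_comm]
    _ ≤ (∑ _i : Fin d, ((ℓ : ℝ) ^ (d + 1))) / (ℓ : ℝ) ^ d := by
        refine div_le_div_of_nonneg_right ?_ hpow.le
        refine Finset.sum_le_sum (fun i _ => ?_)
        have := sum_Bi_le d m ℓ hℓ y i
        calc ∑ x ∈ Finset.Icc (fun _ => (1 : ℤ)) (fun _ => (m : ℤ)),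
              ((Bi d m ℓ y i x).card : ℝ)
            = ((∑ x ∈ Finset.Icc (fun _ => (1 : ℤ)) (fun _ => (m : ℤ)),
                (Bi d m ℓ y i x).card : ℕ) : ℝ) := by push_cast; ring
          _ ≤ ((ℓ ^ (d + 1) : ℕ) : ℝ) := by exact_mod_cast this
          _ = (ℓ : ℝ) ^ (d + 1) := by push_cast; ring
    _ = (d : ℝ) * ℓ := by
        rw [Finset.sum_const, Finset.card_univ, Fintype.card_fin, nsmul_eq_mul, pow_succ]
        field_simp
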